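/- arXiv:1212.5503 — 6 statements merged into one kernel-verified Lean document; each statement's English description precedes it below -/
import Mathlib

section
/- Let C₁, …, C_m, C be nonempty finite subsets of a vector space E over an arbitrary field. Suppose there exist linearly independent vectors c₁ ∈ C₁, …, c_m ∈ C_m, and suppose the augmented family C₁, …, C_m, C is degenerate. Let V = span{c₁, …, c_m} and, for a fixed index i, let Vᵢ = span{c₁, …, c_{i−1}, c_{i+1}, …, c_m}. If Cᵢ is not contained in V, then the linear span L of C is contained in Vᵢ. -/
/-- Lemma lmFin2: with `c₁ ∈ C₁, …, c_m ∈ C_m` linearly independent and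
the augmented family `C₁, …, C_m, C` degenerate, set `V = span {c₁, …, c_m}` and
`Vᵢ = span {c₁, …, c_{i-1}, c_{i+1}, …, c_m}`. If `Cᵢ ⊄ V`, then the span of `C`
is contained in `Vᵢ`. -/
theorem stmt2 {K E : Type*} [Field K] [AddCommGroup E] [Module K E]
    {m : ℕ} (C : Fin m → Finset E) (C' : Finset E)
    (hC : ∀ i, (C i).Nonempty) (hC' : C'.Nonempty)
    (c : Fin m → E) (hc : ∀ i, c i ∈ C i) (hindep : LinearIndependent K c)
    (hdeg : ∀ (d : Fin m → E), (∀ i, d i ∈ C i) → ∀ x ∈ C',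
      ¬ LinearIndependent K (Fin.snoc d x : Fin (m + 1) → E))
    (i : Fin m)
    (hCi : ¬ ((C i : Set E) ⊆ (Submodule.span K (Set.range c) : Set E))) :
    Submodule.span K (C' : Set E) ≤ Submodule.span K (c '' {j : Fin m | j ≠ i}) := by
  classical
  obtain ⟨b, hbC, hbV⟩ := Set.not_subset.1 hCi
  set S : Set E := c '' {j : Fin m | j ≠ i} with hS
  have hSsubV : Submodule.span K S ≤ Submodule.span K (Set.range c) :=
    Submodule.span_mono (Set.image_subset_range _ _)
  have hbS : b ∉ Submodule.span K S := fun h => hbV (hSsubV h)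
  rw [Submodule.span_le]
  intro x hx
  -- x ∈ V
  have hxV : x ∈ Submodule.span K (Set.range c) := by
    have h := hdeg c hc x hx
    rw [linearIndependent_fin_snoc] at h
    push_neg at h
    exact h hindep
  -- the modified family d
  set d : Fin m → E := Function.update c i b with hd
  have hdmem : ∀ j, d j ∈ C j := by
    intro j
    rcases eq_or_ne j i with rfl | h
    · simpa [hd] using hbC
    · simpa [hd, Function.update_of_ne h] using hc j
  -- S is linearly independent (as a set)
  have hsub : LinearIndependent K (fun j : {j : Fin m | j ≠ i} => c j) :=
    hindep.comp _ Subtype.coe_injective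
  have hSindep : LinearIndependent K (fun y : S => (y : E)) := by
    have hinj : Set.InjOn c {j : Fin m | j ≠ i} := hindep.injective.injOn
    exact (linearIndepOn_iff_image hinj).1 hsub
  -- insert b S is linearly independent
  have hins : LinearIndependent K (fun y : ↥(insert b S) => (y : E)) :=
    LinearIndepOn.id_insert hSindep hbS
  -- range d = insert b S
  have hrange : Set.range d = insert b S := by
    ext y
    constructor
    · rintro ⟨j, rfl⟩
      rcases eq_or_ne j i with rfl | h
      · simp [hd]
      · right; exact ⟨j, h, by simp [hd, Function.update_of_ne h]⟩
    · rintro (rfl | ⟨j, hj, rfl⟩)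
      · exact ⟨i, by simp [hd]⟩
      · exact ⟨j, by simp [hd, Function.update_of_ne hj]⟩
  -- d is linearly independent
  have hdinj : Function.Injective d := by
    intro j k hjk
    by_contra hne
    rw [hd] at hjk
    rcases eq_or_ne j i with rfl | hj
    · rw [Function.update_self, Function.update_of_ne (Ne.symm hne)] at hjk
      exact hbV (hjk ▸ Submodule.subset_span ⟨k, rfl⟩)
    · rcases eq_or_ne k i with rfl | hk
      · rw [Function.update_self, Function.update_of_ne hj] at hjk
        exact hbV (hjk.symm ▸ Submodule.subset_span ⟨j, rfl⟩)
      · rw [Function.update_of_ne hj, Function.update_of_ne hk] at hjk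
        exact hne (hindep.injective hjk)
  have hdindep : LinearIndependent K d := by
    apply LinearIndependent.of_linearIndepOn_id_range hdinj
    rw [hrange]
    exact hins
  -- x ∈ span (range d)
  have hxW : x ∈ Submodule.span K (Set.range d) := by
    have h := hdeg d hdmem x hx
    rw [linearIndependent_fin_snoc] at h
    push_neg at h
    exact h hdindep
  rw [hrange, Submodule.mem_span_insert] at hxW
  obtain ⟨t, z, hz, rfl⟩ := hxW
  have hzV : z ∈ Submodule.span K (Set.range c) := hSsubV hz
  have ht : t = 0 := by
    by_contra ht
    apply hbV
    have : t • b ∈ Submodule.span K (Set.range c) := by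
      have := Submodule.sub_mem _ hxV hzV
      simpa using this
    have := Submodule.smul_mem _ t⁻¹ this
    simpa [smul_smul, inv_mul_cancel₀ ht] using this
  simpa [ht] using hz
end

section
/- Let C₁, …, C_m, C be nonempty finite subsets of a vector space E over an arbitrary field. Suppose there exist linearly independent vectors c₁ ∈ C₁, …, c_m ∈ C_m, suppose the augmented family C₁, …, C_m, C is degenerate, and let V = span{c₁, …, c_m}. Fix 0 ≤ l ≤ m and suppose Cᵢ is not contained in V for every i with l < i ≤ m. Then the linear span L of C is contained in the subspace Q = span{c₁, …, c_l}. -/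
lemma sum_update_smul' {K E : Type*} [Field K] [AddCommGroup E] [Module K E]
    {m : ℕ} (c : Fin m → E) (j : Fin m) (w : E) (g : Fin m → K) :
    ∑ i, g i • Function.update c j w i
      = g j • w + ∑ i ∈ Finset.univ.erase j, g i • c i := by
  have h : (fun i => g i • Function.update c j w i)
      = Function.update (fun i => g i • c i) j (g j • w) := by
    funext i
    by_cases h : i = j
    · subst h; simp
    · simp [Function.update_of_ne h]
  rw [h, Finset.sum_update_of_mem (Finset.mem_univ j), Finset.erase_eq]

lemma erase_as_update' {K E : Type*} [Field K] [AddCommGroup E] [Module K E]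
    {m : ℕ} (c : Fin m → E) (j : Fin m) (g : Fin m → K) :
    ∑ i ∈ Finset.univ.erase j, g i • c i
      = ∑ i, Function.update g j 0 i • c i := by
  rw [← Finset.add_sum_erase _ _ (Finset.mem_univ j)]
  rw [Function.update_self, zero_smul, zero_add]
  exact Finset.sum_congr rfl fun i hi => by
    rw [Function.update_of_ne (Finset.ne_of_mem_erase hi)]

lemma erase_mem_span' {K E : Type*} [Field K] [AddCommGroup E] [Module K E]
    {m : ℕ} (c : Fin m → E) (j : Fin m) (g : Fin m → K) :
    ∑ i ∈ Finset.univ.erase j, g i • c i ∈ Submodule.span K (Set.range c) :=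
  Submodule.sum_mem _ fun i _ =>
    Submodule.smul_mem _ _ (Submodule.subset_span ⟨i, rfl⟩)

/-- Lemma lmFin3: with `c₁ ∈ C₁, …, c_m ∈ C_m` linearly independent and
the augmented family `C₁, …, C_m, C` degenerate, set `V = span {c₁, …, c_m}`.
If `0 ≤ l ≤ m` and `Cᵢ ⊄ V` for every `i` with `l < i ≤ m` (0-indexed: `l ≤ i < m`),
then the span of `C` is contained in `Q = span {c₁, …, c_l}`. -/
theorem stmt3 {K E : Type*} [Field K] [AddCommGroup E] [Module K E]
    {m : ℕ} (C : Fin m → Finset E) (C' : Finset E)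
    (hC : ∀ i, (C i).Nonempty) (hC' : C'.Nonempty)
    (c : Fin m → E) (hc : ∀ i, c i ∈ C i) (hindep : LinearIndependent K c)
    (hdeg : ∀ (d : Fin m → E), (∀ i, d i ∈ C i) → ∀ x ∈ C',
      ¬ LinearIndependent K (Fin.snoc d x : Fin (m + 1) → E))
    (l : ℕ) (hl : l ≤ m)
    (hout : ∀ i : Fin m, l ≤ (i : ℕ) →
      ¬ ((C i : Set E) ⊆ (Submodule.span K (Set.range c) : Set E))) :
    Submodule.span K (C' : Set E) ≤
      Submodule.span K (c '' {i : Fin m | (i : ℕ) < l}) := by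
  rw [Submodule.span_le]
  intro x hx
  have hx' : x ∈ C' := hx
  -- Step 1: x ∈ span of all the cᵢ
  have h1 : x ∈ Submodule.span K (Set.range c) := by
    have h := hdeg c hc x hx'
    rw [linearIndependent_fin_snoc] at h
    by_contra hmem
    exact h ⟨hindep, hmem⟩
  obtain ⟨a, ha⟩ := Submodule.mem_span_range_iff_exists_fun K |>.mp h1
  -- Step 2: a j = 0 for all j with l ≤ j
  have h2 : ∀ j : Fin m, l ≤ (j : ℕ) → a j = 0 := by
    intro j hj
    by_contra haj
    obtain ⟨w, hwC, hwV⟩ := Set.not_subset.mp (hout j hj)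
    set d := Function.update c j w with hd
    have hdmem : ∀ i, d i ∈ C i := by
      intro i
      by_cases h : i = j
      · subst h; simpa [hd] using hwC
      · simpa [hd, Function.update_of_ne h] using hc i
    refine hdeg d hdmem x hx' ?_
    rw [linearIndependent_fin_snoc]
    constructor
    · -- d is linearly independent
      rw [Fintype.linearIndependent_iff]
      intro g hg
      rw [hd, sum_update_smul'] at hg
      have hgj : g j = 0 := by
        by_contra hgj
        apply hwV
        have hmem : g j • w ∈ Submodule.span K (Set.range c) := by
          have : g j • w = -(∑ i ∈ Finset.univ.erase j, g i • c i) := by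
            linear_combination (norm := module) hg
          rw [this]
          exact Submodule.neg_mem _ (erase_mem_span' c j g)
        have := Submodule.smul_mem _ (g j)⁻¹ hmem
        rwa [smul_smul, inv_mul_cancel₀ hgj, one_smul] at this
      rw [hgj, zero_smul, zero_add, erase_as_update' c j g] at hg
      have := Fintype.linearIndependent_iff.mp hindep _ hg
      intro i
      by_cases h : i = j
      · subst h; exact hgj
      · have := this i
        rwa [Function.update_of_ne h] at this
    · -- x ∉ span of range d
      intro hxd
      obtain ⟨b, hb⟩ := Submodule.mem_span_range_iff_exists_fun K |>.mp hxd
      rw [hd, sum_update_smul'] at hb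
      have hbj : b j = 0 := by
        by_contra hbj
        apply hwV
        have hmem : b j • w ∈ Submodule.span K (Set.range c) := by
          have : b j • w = x - ∑ i ∈ Finset.univ.erase j, b i • c i := by
            linear_combination (norm := module) hb
          rw [this]
          exact Submodule.sub_mem _ h1 (erase_mem_span' c j b)
        have := Submodule.smul_mem _ (b j)⁻¹ hmem
        rwa [smul_smul, inv_mul_cancel₀ hbj, one_smul] at this
      rw [hbj, zero_smul, zero_add, erase_as_update' c j b] at hb
      -- now Σ a i • c i = x = Σ (update b j 0) i • c i
      have hsum : ∑ i, (a i - Function.update b j 0 i) • c i = 0 := by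
        simp only [sub_smul, Finset.sum_sub_distrib, ha, hb, sub_self]
      have := Fintype.linearIndependent_iff.mp hindep _ hsum j
      rw [Function.update_self, sub_zero] at this
      exact haj this
  -- Step 3: conclude
  rw [← ha]
  refine Submodule.sum_mem _ fun i _ => ?_
  by_cases h : (i : ℕ) < l
  · exact Submodule.smul_mem _ _ (Submodule.subset_span ⟨i, h, rfl⟩)
  · rw [h2 i (le_of_not_gt h), zero_smul]
    exact Submodule.zero_mem _
end

section
/- Let C₁, …, C_m, C be nonempty finite subsets of a vector space E over an arbitrary field. Suppose there exist linearly independent vectors c₁ ∈ C₁, …, c_m ∈ C_m, suppose the augmented family C₁, …, C_m, C is degenerate, and let V = span{c₁, …, c_m}. Fix 0 < l ≤ m, suppose Cᵢ ⊆ V for every i ≤ l and Cᵢ ⊄ V for every i > l, and let Q = span{c₁, …, c_l}. If for some index i ≤ l the set Cᵢ is not contained in Q, then the linear span L of C is contained in the subspace Qᵢ = span{c₁, …, c_{i−1}, c_{i+1}, …, c_l}. -/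
open Set Submodule

section Aux
variable {K E : Type*} [Field K] [AddCommGroup E] [Module K E]

lemma aux_elim {p : Submodule K E} {S : Set E} {d x : E}
    (hx : x ∈ span K (insert d S)) (hxp : x ∈ p) (hS : S ⊆ (p : Set E)) (hd : d ∉ p) :
    x ∈ span K S := by
  rw [Submodule.mem_span_insert] at hx
  obtain ⟨a, z, hz, rfl⟩ := hx
  rcases eq_or_ne a 0 with rfl | ha
  · simpa using hz
  · exfalso
    apply hd
    have hzp : z ∈ p := Submodule.span_le.mpr hS hz
    have had : a • d ∈ p := by
      have := p.sub_mem hxp hzp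
      simpa using this
    simpa [ha] using p.smul_mem a⁻¹ had

lemma aux_update {m : ℕ} {v : Fin m → E} (hv : LinearIndependent K v) (t : Fin m) {d : E}
    (hd : d ∉ span K (Set.range v)) :
    LinearIndependent K (Function.update v t d) := by
  rw [linearIndependent_iff_notMem_span]
  intro j hj
  by_cases hjt : j = t
  · subst hjt
    rw [Function.update_self] at hj
    apply hd
    have himg : Function.update v j d '' (univ \ {j}) = v '' (univ \ {j}) :=
      Set.image_congr fun x hx => Function.update_of_ne (by simpa using hx.2) d v
    rw [himg] at hj
    exact span_mono (Set.image_subset_range v _) hj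
  · rw [Function.update_of_ne hjt] at hj
    have himg : Function.update v t d '' (univ \ {j}) ⊆ insert d (v '' ((univ \ {j}) \ {t})) := by
      rintro y ⟨k, hk, rfl⟩
      by_cases hkt : k = t
      · subst hkt; rw [Function.update_self]; exact Set.mem_insert _ _
      · rw [Function.update_of_ne hkt]
        exact Set.mem_insert_of_mem _ ⟨k, ⟨hk, by simpa using hkt⟩, rfl⟩
    have hj2 : v j ∈ span K (insert d (v '' ((univ \ {j}) \ {t}))) :=
      span_mono himg hj
    have hj3 : v j ∈ span K (v '' ((univ \ {j}) \ {t})) := by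
      refine aux_elim hj2 (subset_span (Set.mem_range_self j)) ?_ hd
      exact (Set.image_subset_range v _).trans subset_span
    have := linearIndependent_iff_notMem_span.mp hv j
    exact this (span_mono (Set.image_mono (f := v) diff_subset) hj3)

lemma aux_mem_iff {ι : Type*} {v : ι → E} (hv : LinearIndependent K v) (ℓ : ι →₀ K) (s : Set ι) :
    Finsupp.linearCombination K v ℓ ∈ span K (v '' s) ↔ (↑ℓ.support : Set ι) ⊆ s := by
  constructor
  · intro h
    rw [Finsupp.mem_span_image_iff_linearCombination] at h
    obtain ⟨ℓ', hℓ', he⟩ := h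
    have heq : ℓ' = ℓ := hv he
    subst heq
    exact (Finsupp.mem_supported K ℓ').mp hℓ'
  · intro h
    rw [Finsupp.mem_span_image_iff_linearCombination]
    exact ⟨ℓ, (Finsupp.mem_supported K ℓ).mpr h, rfl⟩

end Aux

/-- Lemma lmFin4: with `c₁ ∈ C₁, …, c_m ∈ C_m` linearly independent,
the augmented family `C₁, …, C_m, C` degenerate, `V = span {c₁, …, c_m}`,
`0 < l ≤ m`, `Cᵢ ⊆ V` for `i ≤ l` and `Cᵢ ⊄ V` for `i > l` (0-indexed: `i < l`
resp. `l ≤ i`), and `Q = span {c₁, …, c_l}`: if for some `i ≤ l` the set `Cᵢ ⊄ Q`,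
then the span of `C` is contained in `Qᵢ = span {c₁, …, c_{i-1}, c_{i+1}, …, c_l}`. -/
theorem stmt4 {K E : Type*} [Field K] [AddCommGroup E] [Module K E]
    {m : ℕ} (C : Fin m → Finset E) (C' : Finset E)
    (hC : ∀ i, (C i).Nonempty) (hC' : C'.Nonempty)
    (c : Fin m → E) (hc : ∀ i, c i ∈ C i) (hindep : LinearIndependent K c)
    (hdeg : ∀ (d : Fin m → E), (∀ i, d i ∈ C i) → ∀ x ∈ C',
      ¬ LinearIndependent K (Fin.snoc d x : Fin (m + 1) → E))
    (l : ℕ) (hl0 : 0 < l) (hlm : l ≤ m)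
    (hin : ∀ i : Fin m, (i : ℕ) < l →
      (C i : Set E) ⊆ (Submodule.span K (Set.range c) : Set E))
    (hout : ∀ i : Fin m, l ≤ (i : ℕ) →
      ¬ ((C i : Set E) ⊆ (Submodule.span K (Set.range c) : Set E)))
    (i : Fin m) (hi : (i : ℕ) < l)
    (hCi : ¬ ((C i : Set E) ⊆
      (Submodule.span K (c '' {j : Fin m | (j : ℕ) < l}) : Set E))) :
    Submodule.span K (C' : Set E) ≤
      Submodule.span K (c '' {j : Fin m | (j : ℕ) < l ∧ j ≠ i}) := by
  rw [Submodule.span_le]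
  intro x hx
  -- from degeneracy: every independent choice spans x
  have key : ∀ e : Fin m → E, (∀ j, e j ∈ C j) → LinearIndependent K e →
      x ∈ span K (Set.range e) := by
    intro e he hee
    by_contra hns
    exact hdeg e he x hx (linearIndependent_fin_snoc.mpr ⟨hee, hns⟩)
  have hxV : x ∈ span K (Set.range c) := key c hc hindep
  -- representation of x
  have hxV' : x ∈ span K (c '' univ) := by rwa [Set.image_univ]
  rw [Finsupp.mem_span_image_iff_linearCombination] at hxV'
  obtain ⟨ℓx, -, hℓx⟩ := hxV'
  -- bad element b of C i
  obtain ⟨b, hbC, hbQ⟩ := Set.not_subset.mp hCi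
  have hbQ' : b ∉ span K (c '' {j : Fin m | (j : ℕ) < l}) := by simpa using hbQ
  have hbV : b ∈ span K (Set.range c) := by
    have := hin i hi hbC; simpa using this
  have hbV' : b ∈ span K (c '' univ) := by rwa [Set.image_univ]
  rw [Finsupp.mem_span_image_iff_linearCombination] at hbV'
  obtain ⟨ℓb, -, hℓb⟩ := hbV'
  subst hℓx hℓb
  -- index t ≥ l with nonzero coefficient of b
  have hsuppb : ¬ ((↑ℓb.support : Set (Fin m)) ⊆ {j : Fin m | (j : ℕ) < l}) := by
    intro h
    exact hbQ' ((aux_mem_iff hindep ℓb _).mpr h)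
  obtain ⟨t, htsupp, htl⟩ := Set.not_subset.mp hsuppb
  have hlt : l ≤ (t : ℕ) := le_of_not_gt htl
  have hbWt : Finsupp.linearCombination K c ℓb ∉ span K (c '' (univ \ {t})) := by
    intro h
    have := (aux_mem_iff hindep ℓb _).mp h htsupp
    exact this.2 rfl
  -- picking elements outside V
  have hd : ∀ t' : Fin m, l ≤ (t' : ℕ) → ∃ d ∈ C t', d ∉ span K (Set.range c) := by
    intro t' h
    obtain ⟨d, hd1, hd2⟩ := Set.not_subset.mp (hout t' h)
    exact ⟨d, hd1, by simpa using hd2⟩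
  -- generic facts
  have hsubV : ∀ s : Set (Fin m), c '' s ⊆ (span K (Set.range c) : Set E) :=
    fun s => (Set.image_subset_range c s).trans subset_span
  -- step 1: support of x is below l
  have hsx1 : (↑ℓx.support : Set (Fin m)) ⊆ {j : Fin m | (j : ℕ) < l} := by
    intro k hk
    by_contra hkl
    have hlk : l ≤ (k : ℕ) := le_of_not_gt hkl
    obtain ⟨d, hdC, hdV⟩ := hd k hlk
    have hu : LinearIndependent K (Function.update c k d) := aux_update hindep k hdV
    have huC : ∀ j, Function.update c k d j ∈ C j := by
      intro j
      by_cases hj : j = k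
      · subst hj; rw [Function.update_self]; exact hdC
      · rw [Function.update_of_ne hj]; exact hc j
    have hxe := key _ huC hu
    have hre : Set.range (Function.update c k d) ⊆ insert d (c '' (univ \ {k})) := by
      rintro y ⟨j, rfl⟩
      by_cases hj : j = k
      · subst hj; rw [Function.update_self]; exact Set.mem_insert _ _
      · rw [Function.update_of_ne hj]
        exact Set.mem_insert_of_mem _ ⟨j, ⟨trivial, by simpa using hj⟩, rfl⟩
    have hx2 : Finsupp.linearCombination K c ℓx ∈ span K (insert d (c '' (univ \ {k}))) :=
      span_mono hre hxe
    have hx3 := aux_elim hx2 hxV (hsubV _) hdV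
    exact ((aux_mem_iff hindep ℓx _).mp hx3 hk).2 rfl
  -- step 2: i not in support of x
  obtain ⟨d, hdC, hdV⟩ := hd t hlt
  have hu : LinearIndependent K (Function.update c t d) := aux_update hindep t hdV
  have hbu : Finsupp.linearCombination K c ℓb ∉ span K (Set.range (Function.update c t d)) := by
    intro h
    have hre : Set.range (Function.update c t d) ⊆ insert d (c '' (univ \ {t})) := by
      rintro y ⟨j, rfl⟩
      by_cases hj : j = t
      · subst hj; rw [Function.update_self]; exact Set.mem_insert _ _
      · rw [Function.update_of_ne hj]
        exact Set.mem_insert_of_mem _ ⟨j, ⟨trivial, by simpa using hj⟩, rfl⟩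
    exact hbWt (aux_elim (span_mono hre h) hbV (hsubV _) hdV)
  have hu2 : LinearIndependent K
      (Function.update (Function.update c t d) i (Finsupp.linearCombination K c ℓb)) :=
    aux_update hu i hbu
  have hit : i ≠ t := by
    intro h
    rw [h] at hi
    omega
  have huC2 : ∀ j, Function.update (Function.update c t d) i
      (Finsupp.linearCombination K c ℓb) j ∈ C j := by
    intro j
    by_cases hji : j = i
    · subst hji; rw [Function.update_self]; exact hbC
    · rw [Function.update_of_ne hji]
      by_cases hjt : j = t
      · subst hjt; rw [Function.update_self]; exact hdC
      · rw [Function.update_of_ne hjt]; exact hc j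
  have hxe2 := key _ huC2 hu2
  have hre2 : Set.range (Function.update (Function.update c t d) i
      (Finsupp.linearCombination K c ℓb)) ⊆
      insert d (insert (Finsupp.linearCombination K c ℓb) (c '' ((univ \ {t}) \ {i}))) := by
    rintro y ⟨j, rfl⟩
    by_cases hji : j = i
    · subst hji; rw [Function.update_self]
      exact Set.mem_insert_of_mem _ (Set.mem_insert _ _)
    · rw [Function.update_of_ne hji]
      by_cases hjt : j = t
      · subst hjt; rw [Function.update_self]; exact Set.mem_insert _ _
      · rw [Function.update_of_ne hjt]
        refine Set.mem_insert_of_mem _ (Set.mem_insert_of_mem _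
          ⟨j, ⟨⟨trivial, by simpa using hjt⟩, by simpa using hji⟩, rfl⟩)
  have hx5 : Finsupp.linearCombination K c ℓx ∈
      span K (insert d (insert (Finsupp.linearCombination K c ℓb) (c '' ((univ \ {t}) \ {i})))) :=
    span_mono hre2 hxe2
  have hVins : insert (Finsupp.linearCombination K c ℓb) (c '' ((univ \ {t}) \ {i})) ⊆
      (span K (Set.range c) : Set E) := by
    intro y hy
    rcases hy with rfl | hy
    · exact hbV
    · exact hsubV _ hy
  have hx6 := aux_elim hx5 hxV hVins hdV
  have hxWt : Finsupp.linearCombination K c ℓx ∈ span K (c '' (univ \ {t})) := by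
    refine (aux_mem_iff hindep ℓx _).mpr (hsx1.trans ?_)
    intro j hj
    simp only [Set.mem_setOf_eq] at hj
    refine ⟨trivial, ?_⟩
    simp only [Set.mem_singleton_iff]
    rintro rfl
    omega
  have hx7 := aux_elim hx6 hxWt
    ((Set.image_mono (f := c) diff_subset).trans subset_span) hbWt
  have hsx2 := (aux_mem_iff hindep ℓx _).mp hx7
  have hfinal : (↑ℓx.support : Set (Fin m)) ⊆ {j : Fin m | (j : ℕ) < l ∧ j ≠ i} := by
    intro k hk
    refine ⟨hsx1 hk, ?_⟩
    have := (hsx2 hk).2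
    simpa using this
  exact (aux_mem_iff hindep ℓx _).mpr hfinal
end

section
/- Let h : ℝ^N → ℝ be continuous, and suppose there exist finitely many closed convex sets P₁, …, P_q covering ℝ^N, vectors v₁, …, v_q ∈ ℝ^N, and constants b₁, …, b_q ∈ ℝ such that h(x) = ⟨vᵢ, x⟩ + bᵢ for all x ∈ Pᵢ. Let H be a linear subspace of ℝ^N such that vᵢ − vⱼ ∈ H for all i, j. Then the function x ↦ h(x) − ⟨v₁, x⟩ is constant along the orthogonal complement H^⊥, i.e., h(x + y) − ⟨v₁, x + y⟩ = h(x) − ⟨v₁, x⟩ for all x ∈ ℝ^N and all y ∈ H^⊥; equivalently, h − ⟨v₁, ·⟩ is the pullback of a function on ℝ^N/H^⊥ under the canonical projection. -/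
open scoped RealInnerProductSpace

/-- Lemma lm1cell: let `h : ℝ^N → ℝ` be continuous and affine
(`h(x) = ⟨vᵢ, x⟩ + bᵢ`) on each member of a finite cover of `ℝ^N` by closed convex
sets, and let `H` be a subspace with `vᵢ − vⱼ ∈ H` for all `i, j`. Then
`x ↦ h(x) − ⟨v₁, x⟩` is constant along the orthogonal complement `H^⊥`. -/
theorem stmt14 {N q : ℕ} (hq : 0 < q)
    (h : EuclideanSpace ℝ (Fin N) → ℝ) (hcont : Continuous h)
    (P : Fin q → Set (EuclideanSpace ℝ (Fin N)))
    (hclosed : ∀ i, IsClosed (P i)) (hconv : ∀ i, Convex ℝ (P i))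
    (hcover : (⋃ i, P i) = Set.univ)
    (v : Fin q → EuclideanSpace ℝ (Fin N)) (b : Fin q → ℝ)
    (haff : ∀ i, ∀ x ∈ P i, h x = ⟪v i, x⟫ + b i)
    (H : Submodule ℝ (EuclideanSpace ℝ (Fin N)))
    (hH : ∀ i j, v i - v j ∈ H) :
    ∀ x : EuclideanSpace ℝ (Fin N), ∀ y ∈ Hᗮ,
      h (x + y) - ⟪v ⟨0, hq⟩, x + y⟫ = h x - ⟪v ⟨0, hq⟩, x⟫ := by
  intro x y hy
  set i0 : Fin q := ⟨0, hq⟩ with hi0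
  -- the restriction of the "reduced" function to the line through x in direction y
  set L : ℝ → EuclideanSpace ℝ (Fin N) := fun t => x + t • y with hL
  have hLcont : Continuous L := by
    apply continuous_const.add
    exact continuous_id.smul continuous_const
  set φ : ℝ → ℝ := fun t => h (L t) - ⟪v i0, L t⟫ with hφ
  have hφcont : Continuous φ := by
    apply (hcont.comp hLcont).sub
    exact (continuous_const.inner hLcont)
  -- the trace of the cover on the line
  set S : Fin q → Set ℝ := fun i => L ⁻¹' (P i) with hS
  have hSclosed : ∀ i, IsClosed (S i) := fun i => (hclosed i).preimage hLcont
  have hScover : ∀ t : ℝ, ∃ i, t ∈ S i := by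
    intro t
    have : L t ∈ ⋃ i, P i := hcover ▸ Set.mem_univ _
    exact (Set.mem_iUnion.mp this : ∃ i, L t ∈ P i)
  -- φ is constant on each S i
  have hconst : ∀ i, ∀ t ∈ S i, φ t = ⟪v i - v i0, x⟫ + b i := by
    intro i t ht
    have horth : ⟪v i - v i0, y⟫ = 0 := by
      exact (Submodule.mem_orthogonal H y).mp hy _ (hH i i0)
    have := haff i (L t) ht
    simp only [hφ]; rw [this]; simp only [hL]
    rw [show ⟪v i, x + t • y⟫ + b i - ⟪v i0, x + t • y⟫
        = ⟪v i - v i0, x + t • y⟫ + b i by rw [inner_sub_left]; ring]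
    rw [inner_add_right, real_inner_smul_right, horth]
    ring
  -- φ is locally constant
  have hloc : IsLocallyConstant φ := by
    rw [IsLocallyConstant.iff_exists_open]
    intro t
    refine ⟨(⋃ i ∈ {i : Fin q | t ∉ S i}, S i)ᶜ, ?_, ?_, ?_⟩
    · rw [isOpen_compl_iff]
      exact Set.Finite.isClosed_biUnion (Set.toFinite _) (fun i _ => hSclosed i)
    · simp only [Set.mem_compl_iff, Set.mem_iUnion]
      rintro ⟨i, hi, hti⟩
      exact hi hti
    · intro s hs
      obtain ⟨i, hsi⟩ := hScover s
      have hti : t ∈ S i := by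
        by_contra hti
        exact hs (Set.mem_biUnion hti hsi)
      rw [hconst i s hsi, hconst i t hti]
  -- conclude by connectedness of ℝ
  have := hloc.apply_eq_of_isPreconnected isPreconnected_univ
      (Set.mem_univ (1 : ℝ)) (Set.mem_univ (0 : ℝ))
  simpa [hφ, hL] using this
end

section
/- Let h : ℝ^N → ℝ be continuous, and suppose there exist finitely many closed convex sets P₁, …, P_q covering ℝ^N on each of which h coincides with an affine function. Then there exist convex functions f, g : ℝ^N → ℝ, each of which is likewise continuous and coincides with an affine function on each member of some finite cover of ℝ^N by closed convex sets, such that h = f − g. -/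
/-- A continuous function `ℝ^N → ℝ` which coincides with an affine function on each
member of some finite cover of `ℝ^N` by closed convex sets (piecewise linearity). -/
def IsPiecewiseLinear {N : ℕ} (h : (Fin N → ℝ) → ℝ) : Prop :=
  Continuous h ∧
    ∃ (q : ℕ) (P : Fin q → Set (Fin N → ℝ)),
      (∀ i, IsClosed (P i)) ∧ (∀ i, Convex ℝ (P i)) ∧ (⋃ i, P i) = Set.univ ∧
      ∀ i, ∃ (l : (Fin N → ℝ) →ₗ[ℝ] ℝ) (b : ℝ), ∀ x ∈ P i, h x = l x + b

open Set

open Set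

/-- A continuous function satisfying a local symmetric midpoint inequality is convex. -/
lemma convexOn_of_local_midpoint {N : ℕ} (f : (Fin N → ℝ) → ℝ) (hf : Continuous f)
    (key : ∀ c v : (Fin N → ℝ), ∃ ε0 > (0:ℝ), ∀ ε : ℝ, 0 < ε → ε < ε0 →
      2 * f c ≤ f (c + ε • v) + f (c - ε • v)) :
    ConvexOn ℝ Set.univ f := by
  refine ⟨convex_univ, ?_⟩
  intro x _ y _ a b ha hb hab
  set φ : ℝ → ℝ := fun t => f (x + t • (y - x)) - ((1 - t) * f x + t * f y) with hφ
  have hφc : Continuous φ := by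
    apply Continuous.sub
    · exact hf.comp (continuous_const.add (continuous_id.smul continuous_const))
    · fun_prop
  have hφ0 : φ 0 = 0 := by simp [hφ]
  have hφ1 : φ 1 = 0 := by simp [hφ]
  have main : ∀ t ∈ Icc (0:ℝ) 1, φ t ≤ 0 := by
    by_contra hcon
    push_neg at hcon
    obtain ⟨t0, ht0, ht0pos⟩ := hcon
    obtain ⟨m, hm, hmax⟩ := isCompact_Icc.exists_isMaxOn (Set.nonempty_Icc.2 zero_le_one)
      hφc.continuousOn
    set M := φ m with hM
    have hMpos : 0 < M := lt_of_lt_of_le ht0pos (hmax ht0)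
    set A : Set ℝ := Icc (0:ℝ) 1 ∩ φ ⁻¹' {M} with hA
    have hAne : A.Nonempty := ⟨m, hm, rfl⟩
    have hAclosed : IsClosed A := (isClosed_Icc).inter (isClosed_singleton.preimage hφc)
    have hAbdd : BddAbove A := (isCompact_Icc.inter_right (isClosed_singleton.preimage hφc)).bddAbove
    set t : ℝ := sSup A with ht
    have htA : t ∈ A := hAclosed.csSup_mem hAne hAbdd
    obtain ⟨htI, htM⟩ := htA
    have htM' : φ t = M := htM
    have ht0' : 0 < t := by
      rcases lt_or_eq_of_le htI.1 with h | h
      · exact h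
      · exfalso; rw [← h] at htM'; rw [hφ0] at htM'; linarith
    have ht1' : t < 1 := by
      rcases lt_or_eq_of_le htI.2 with h | h
      · exact h
      · exfalso; rw [h] at htM'; rw [hφ1] at htM'; linarith
    obtain ⟨ε0, hε0, hkey⟩ := key (x + t • (y - x)) (y - x)
    set ε : ℝ := min (ε0 / 2) (min t (1 - t)) with hε
    have hεpos : 0 < ε := by
      apply lt_min (by linarith)
      exact lt_min ht0' (by linarith)
    have hεlt : ε < ε0 := lt_of_le_of_lt (min_le_left _ _) (by linarith)
    have hεt : ε ≤ t := le_trans (min_le_right _ _) (min_le_left _ _)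
    have hεt1 : ε ≤ 1 - t := le_trans (min_le_right _ _) (min_le_right _ _)
    have hmid := hkey ε hεpos hεlt
    have e1 : x + t • (y - x) + ε • (y - x) = x + (t + ε) • (y - x) := by module
    have e2 : x + t • (y - x) - ε • (y - x) = x + (t - ε) • (y - x) := by module
    rw [e1, e2] at hmid
    have hsum : 2 * φ t ≤ φ (t + ε) + φ (t - ε) := by
      simp only [hφ]
      ring_nf
      ring_nf at hmid
      linarith
    have hle1 : φ (t - ε) ≤ M := hmax ⟨by linarith, by linarith⟩
    have hle2 : φ (t + ε) ≤ M := hmax ⟨by linarith, by linarith⟩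
    have : φ (t + ε) = M := by linarith [hsum, htM']
    have : t + ε ∈ A := ⟨⟨by linarith, by linarith⟩, this⟩
    have := le_csSup hAbdd this
    linarith
  have hb1 : b ∈ Icc (0:ℝ) 1 := ⟨hb, by linarith⟩
  have hmb := main b hb1
  have e3 : x + b • (y - x) = a • x + b • y := by
    have : a = 1 - b := by linarith
    rw [this]; module
  simp only [hφ, e3] at hmb
  have ha' : a = 1 - b := by linarith
  calc f (a • x + b • y) ≤ (1 - b) * f x + b * f y := by linarith
    _ = a • f x + b • f y := by rw [ha']; simp [smul_eq_mul]


/-- `h + ∑ |affine|` is piecewise linear whenever `h` is piecewise affine on a cover. -/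
lemma aux_PL {N q : ℕ} {ι : Type} [Fintype ι] (u : ι → ((Fin N → ℝ) →ₗ[ℝ] ℝ)) (B : ι → ℝ)
    (P : Fin q → Set (Fin N → ℝ)) (hPc : ∀ i, IsClosed (P i)) (hPv : ∀ i, Convex ℝ (P i))
    (hcov : (⋃ i, P i) = Set.univ) (l : Fin q → ((Fin N → ℝ) →ₗ[ℝ] ℝ)) (b : Fin q → ℝ)
    (h : (Fin N → ℝ) → ℝ) (hl : ∀ i, ∀ x ∈ P i, h x = l i x + b i) (hcont : Continuous h) :
    IsPiecewiseLinear (fun x => h x + ∑ p : ι, |u p x + B p|) := by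
  classical
  set S : (ι → Bool) → Set (Fin N → ℝ) := fun σ =>
    ⋂ p, {x | (if σ p then (u p) else -(u p)) x ≤ (if σ p then -(B p) else B p)} with hS
  have hSclosed : ∀ σ, IsClosed (S σ) := fun σ =>
    isClosed_iInter fun p =>
      isClosed_le (LinearMap.continuous_of_finiteDimensional _) continuous_const
  have hSconv : ∀ σ, Convex ℝ (S σ) := fun σ =>
    convex_iInter fun p => convex_halfSpace_le (LinearMap.isLinear _) _
  have hSmem : ∀ x, x ∈ S (fun p => decide (u p x + B p ≤ 0)) := by
    intro x
    rw [hS]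
    refine Set.mem_iInter.2 fun p => ?_
    by_cases hp : u p x + B p ≤ 0
    · simp only [Set.mem_setOf_eq, decide_eq_true_eq]
      rw [if_pos hp, if_pos hp]
      linarith
    · simp only [Set.mem_setOf_eq, decide_eq_true_eq]
      rw [if_neg hp, if_neg hp, LinearMap.neg_apply]
      linarith
  set Lσ : (ι → Bool) → ((Fin N → ℝ) →ₗ[ℝ] ℝ) :=
    fun σ => ∑ p, (if σ p then -(u p) else u p) with hLσ
  set Bσ : (ι → Bool) → ℝ := fun σ => ∑ p, (if σ p then -(B p) else B p) with hBσ
  have hgval : ∀ σ, ∀ x ∈ S σ, (∑ p : ι, |u p x + B p|) = Lσ σ x + Bσ σ := by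
    intro σ x hx
    rw [hLσ, hBσ]
    simp only [LinearMap.sum_apply]
    rw [← Finset.sum_add_distrib]
    refine Finset.sum_congr rfl fun p _ => ?_
    have hxp := Set.mem_iInter.1 hx p
    simp only [Set.mem_setOf_eq] at hxp
    rcases Bool.eq_false_or_eq_true (σ p) with hb | hb
    · rw [hb] at hxp ⊢
      rw [if_pos rfl, if_pos rfl] at hxp
      rw [if_pos rfl, if_pos rfl]
      rw [LinearMap.neg_apply]
      rw [abs_of_nonpos (by linarith)]
      ring
    · rw [hb] at hxp ⊢
      rw [if_neg Bool.false_ne_true, if_neg Bool.false_ne_true] at hxp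
      rw [if_neg Bool.false_ne_true, if_neg Bool.false_ne_true]
      rw [LinearMap.neg_apply] at hxp
      rw [abs_of_nonneg (by linarith)]
  refine ⟨hcont.add (continuous_finset_sum _ fun p _ =>
      ((LinearMap.continuous_of_finiteDimensional _).add continuous_const).abs), ?_⟩
  set κ := Fin q × (ι → Bool)
  refine ⟨Fintype.card κ, fun k => P ((Fintype.equivFin κ).symm k).1 ∩
    S ((Fintype.equivFin κ).symm k).2, ?_, ?_, ?_, ?_⟩
  · exact fun k => (hPc _).inter (hSclosed _)
  · exact fun k => (hPv _).inter (hSconv _)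
  · apply Set.eq_univ_of_forall
    intro x
    have hx : x ∈ ⋃ i, P i := by rw [hcov]; trivial
    obtain ⟨i, hi⟩ := Set.mem_iUnion.1 hx
    refine Set.mem_iUnion.2 ⟨(Fintype.equivFin κ) (i, fun p => decide (u p x + B p ≤ 0)), ?_⟩
    rw [Equiv.symm_apply_apply]
    exact ⟨hi, hSmem x⟩
  · intro k
    refine ⟨l ((Fintype.equivFin κ).symm k).1 + Lσ ((Fintype.equivFin κ).symm k).2,
      b ((Fintype.equivFin κ).symm k).1 + Bσ ((Fintype.equivFin κ).symm k).2, ?_⟩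
    rintro x ⟨hx1, hx2⟩
    show h x + _ = _
    rw [hl _ _ hx1, hgval _ _ hx2, LinearMap.add_apply]
    ring

/-- every piecewise linear function `h : ℝ^N → ℝ` is the difference
`h = f − g` of two convex piecewise linear functions. -/
theorem stmt15 {N : ℕ} (h : (Fin N → ℝ) → ℝ) (hpl : IsPiecewiseLinear h) :
    ∃ f g : (Fin N → ℝ) → ℝ,
      ConvexOn ℝ Set.univ f ∧ ConvexOn ℝ Set.univ g ∧
      IsPiecewiseLinear f ∧ IsPiecewiseLinear g ∧ h = f - g := by
  obtain ⟨hc, q, P, hPclosed, hPconv, hPcov, hPaff⟩ := hpl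
  choose l b hlb using hPaff
  classical
  set u : Fin q × Fin q → ((Fin N → ℝ) →ₗ[ℝ] ℝ) := fun p => l p.1 - l p.2 with hu
  set B : Fin q × Fin q → ℝ := fun p => b p.1 - b p.2 with hB
  set g : (Fin N → ℝ) → ℝ := fun x => ∑ p : Fin q × Fin q, |u p x + B p| with hg
  set f : (Fin N → ℝ) → ℝ := fun x => h x + g x with hf
  have hgc : Continuous g := continuous_finset_sum _ fun p _ =>
    ((LinearMap.continuous_of_finiteDimensional _).add continuous_const).abs
  have hfc : Continuous f := hc.add hgc
  -- convexity of g
  have habs : ∀ (A : (Fin N → ℝ) →ₗ[ℝ] ℝ) (C : ℝ) (x y : Fin N → ℝ) (a c : ℝ), 0 ≤ a → 0 ≤ c →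
      a + c = 1 → |A (a • x + c • y) + C| ≤ a * |A x + C| + c * |A y + C| := by
    intro A C x y a c ha hcc hac
    have e : A (a • x + c • y) + C = a * (A x + C) + c * (A y + C) := by
      rw [map_add, map_smul, map_smul]
      simp only [smul_eq_mul]
      linear_combination (-C) * hac
    rw [e]
    calc |a * (A x + C) + c * (A y + C)| ≤ |a * (A x + C)| + |c * (A y + C)| := abs_add_le _ _
      _ = a * |A x + C| + c * |A y + C| := by
          rw [abs_mul, abs_mul, abs_of_nonneg ha, abs_of_nonneg hcc]
  have hgconv : ConvexOn ℝ Set.univ g := by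
    refine ⟨convex_univ, ?_⟩
    intro x _ y _ a c ha hcc hac
    simp only [hg, smul_eq_mul]
    calc ∑ p : Fin q × Fin q, |u p (a • x + c • y) + B p|
        ≤ ∑ p : Fin q × Fin q, (a * |u p x + B p| + c * |u p y + B p|) :=
          Finset.sum_le_sum fun p _ => habs (u p) (B p) x y a c ha hcc hac
      _ = a * ∑ p : Fin q × Fin q, |u p x + B p| + c * ∑ p : Fin q × Fin q, |u p y + B p| := by
          rw [Finset.sum_add_distrib, Finset.mul_sum, Finset.mul_sum]
  -- local piece selection
  have hlocal : ∀ z : Fin N → ℝ, ∃ δ > (0:ℝ), ∀ w, dist w z < δ → ∃ i, z ∈ P i ∧ w ∈ P i := by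
    intro z
    set T : Set (Fin N → ℝ) := ⋃ i ∈ {i : Fin q | z ∉ P i}, P i with hT
    have hTclosed : IsClosed T :=
      Set.Finite.isClosed_biUnion (Set.toFinite _) fun i _ => hPclosed i
    have hzT : z ∉ T := by
      rw [hT]
      simp only [Set.mem_iUnion, Set.mem_setOf_eq, not_exists]
      intro i hi hzi
      exact hi hzi
    have hnb : Tᶜ ∈ nhds z := hTclosed.isOpen_compl.mem_nhds hzT
    obtain ⟨δ, hδ, hball⟩ := Metric.mem_nhds_iff.1 hnb
    refine ⟨δ, hδ, fun w hw => ?_⟩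
    have hw' : w ∉ T := hball (by rwa [Metric.mem_ball])
    have hwc : w ∈ ⋃ i, P i := by rw [hPcov]; trivial
    obtain ⟨i, hi⟩ := Set.mem_iUnion.1 hwc
    refine ⟨i, ?_, hi⟩
    by_contra hz
    exact hw' (Set.mem_biUnion hz hi)
  -- key local midpoint inequality for f
  have hkey : ∀ c v : Fin N → ℝ, ∃ ε0 > (0:ℝ), ∀ ε : ℝ, 0 < ε → ε < ε0 →
      2 * f c ≤ f (c + ε • v) + f (c - ε • v) := by
    intro c v
    obtain ⟨δ, hδ, hloc⟩ := hlocal c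
    refine ⟨δ / (‖v‖ + 1), by positivity, fun ε hε hεδ => ?_⟩
    have hnv : (0:ℝ) ≤ ‖v‖ := norm_nonneg v
    have hd1 : dist (c + ε • v) c < δ := by
      rw [dist_eq_norm, add_sub_cancel_left, norm_smul, Real.norm_eq_abs, abs_of_pos hε]
      nlinarith [(lt_div_iff₀ (show (0:ℝ) < ‖v‖ + 1 by positivity)).1 hεδ]
    have hd2 : dist (c - ε • v) c < δ := by
      rw [dist_eq_norm, sub_sub_cancel_left, norm_neg, norm_smul, Real.norm_eq_abs,
        abs_of_pos hε]
      nlinarith [(lt_div_iff₀ (show (0:ℝ) < ‖v‖ + 1 by positivity)).1 hεδ]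
    obtain ⟨i, hci, hwi⟩ := hloc _ hd1
    obtain ⟨j, hcj, hwj⟩ := hloc _ hd2
    have hi1 : h (c + ε • v) = l i c + ε * l i v + b i := by
      rw [hlb i _ hwi, map_add, map_smul, smul_eq_mul]
    have hj1 : h (c - ε • v) = l j c - ε * l j v + b j := by
      rw [hlb j _ hwj, map_sub, map_smul, smul_eq_mul]
    have hci' : h c = l i c + b i := hlb i c hci
    have hcj' : h c = l j c + b j := hlb j c hcj
    set d : ℝ := l i v - l j v with hd
    -- the (i,j) pair term
    have hpair0 : u (i, j) c + B (i, j) = 0 := by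
      simp only [hu, hB, LinearMap.sub_apply]
      linarith [hci', hcj']
    have hpairv : u (i, j) v = d := by simp only [hu, hd, LinearMap.sub_apply]
    -- sum bound
    have hterm : ∀ p : Fin q × Fin q,
        2 * |u p c + B p| ≤ |u p (c + ε • v) + B p| + |u p (c - ε • v) + B p| := by
      intro p
      have e : (u p (c + ε • v) + B p) + (u p (c - ε • v) + B p) = 2 * (u p c + B p) := by
        rw [map_add, map_sub]
        ring
      calc 2 * |u p c + B p| = |(u p (c + ε • v) + B p) + (u p (c - ε • v) + B p)| := by
            rw [e, abs_mul]
            simp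
        _ ≤ _ := abs_add_le _ _
    have hpairval : |u (i,j) (c + ε • v) + B (i,j)| + |u (i,j) (c - ε • v) + B (i,j)|
        - 2 * |u (i,j) c + B (i,j)| = 2 * (ε * |d|) := by
      rw [map_add, map_sub, map_smul, smul_eq_mul]
      have e1 : u (i,j) c + ε * u (i,j) v + B (i,j) = ε * d := by
        rw [hpairv]; linarith [hpair0]
      have e2 : u (i,j) c - ε * u (i,j) v + B (i,j) = -(ε * d) := by
        rw [hpairv]; linarith [hpair0]
      have e1' : u (i,j) c + ε * u (i,j) v + B (i,j) = ε * d := e1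
      rw [show (u (i,j)) c + ε * (u (i,j)) v + B (i,j) = ε * d from e1,
        show (u (i,j)) c - ε * (u (i,j)) v + B (i,j) = -(ε * d) from e2, hpair0]
      rw [abs_neg, abs_mul, abs_of_pos hε]
      simp
      ring
    have hgsum : 2 * g c + 2 * (ε * |d|) ≤ g (c + ε • v) + g (c - ε • v) := by
      simp only [hg]
      have := Finset.single_le_sum (f := fun p : Fin q × Fin q =>
        |u p (c + ε • v) + B p| + |u p (c - ε • v) + B p| - 2 * |u p c + B p|)
        (fun p _ => by linarith [hterm p]) (Finset.mem_univ (i,j))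
      rw [hpairval] at this
      have hsplit : ∑ p : Fin q × Fin q,
          (|u p (c + ε • v) + B p| + |u p (c - ε • v) + B p| - 2 * |u p c + B p|)
          = (∑ p : Fin q × Fin q, |u p (c + ε • v) + B p|)
            + (∑ p : Fin q × Fin q, |u p (c - ε • v) + B p|)
            - 2 * ∑ p : Fin q × Fin q, |u p c + B p| := by
        simp [Finset.sum_add_distrib, Finset.sum_sub_distrib, Finset.mul_sum]
      rw [hsplit] at this
      linarith
    have hhsum : h (c + ε • v) + h (c - ε • v) - 2 * h c = ε * d := by
      rw [hi1, hj1, hd]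
      have : 2 * h c = (l i c + b i) + (l j c + b j) := by linarith [hci', hcj']
      rw [this]
      ring
    have hεd : -(ε * |d|) ≤ ε * d := by nlinarith [neg_abs_le d, abs_nonneg d]
    have hεabs : (0:ℝ) ≤ ε * |d| := by positivity
    simp only [hf]
    linarith
  -- convexity of f
  have hfconv : ConvexOn ℝ Set.univ f := convexOn_of_local_midpoint f hfc hkey
  -- piecewise linearity of f
  have hfPL : IsPiecewiseLinear f := by
    have hPL := aux_PL u B P hPclosed hPconv hPcov l b h hlb hc
    have e : (fun x => h x + ∑ p : Fin q × Fin q, |u p x + B p|) = f := by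
      funext x; simp [hf, hg]
    rwa [e] at hPL
  -- piecewise linearity of g
  have hgPL : IsPiecewiseLinear g := by
    have hPL := aux_PL u B (fun _ : Fin 1 => Set.univ) (fun _ => isClosed_univ)
      (fun _ => convex_univ) (Set.iUnion_const _) (fun _ => 0) (fun _ => 0) (fun _ => (0:ℝ))
      (fun i x _ => by simp) continuous_const
    have e : (fun x => (0:ℝ) + ∑ p : Fin q × Fin q, |u p x + B p|) = g := by
      funext x; simp [hg]
    rwa [e] at hPL
  refine ⟨f, g, hfconv, hgconv, hfPL, hgPL, ?_⟩
  funext x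
  simp [hf]
end

section
/- Let γ be the convex hull of a finite subset of N-dimensional Euclidean space and let δ be a nonempty exposed face of γ whose affine span has dimension m. Let Δ = {z ∈ ℝ^N : ∀ x ∈ δ, ∀ y ∈ γ, ⟨y, z⟩ ≤ ⟨x, z⟩} be the dual (normal) cone of the face δ. Then the linear span of Δ has dimension N − m. -/
open scoped RealInnerProductSpace

/-- let `γ = conv(finite set) ⊆ ℝ^N`, let `δ` be a nonempty exposed face
of `γ` whose affine span has dimension `m`, and let
`Δ = {z : ∀ x ∈ δ, ∀ y ∈ γ, ⟨y, z⟩ ≤ ⟨x, z⟩}` be the dual (normal) cone of `δ`.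
Then the linear span of `Δ` has dimension `N − m`. -/
theorem stmt16 {N m : ℕ} (A : Finset (EuclideanSpace ℝ (Fin N)))
    (γ : Set (EuclideanSpace ℝ (Fin N))) (hγ : γ = convexHull ℝ (A : Set _))
    (δ : Set (EuclideanSpace ℝ (Fin N))) (hδne : δ.Nonempty)
    (hexp : IsExposed ℝ γ δ)
    (hm : Module.finrank ℝ (affineSpan ℝ δ).direction = m)
    (Δ : Set (EuclideanSpace ℝ (Fin N)))
    (hΔ : Δ = {z | ∀ x ∈ δ, ∀ y ∈ γ, ⟪y, z⟫ ≤ ⟪x, z⟫}) :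
    Module.finrank ℝ (Submodule.span ℝ Δ) = N - m := by
  classical
  have hδγ : δ ⊆ γ := hexp.subset
  obtain ⟨l, hl⟩ := hexp hδne
  obtain ⟨x₀, hx₀⟩ := hδne
  set u : EuclideanSpace ℝ (Fin N) :=
    (InnerProductSpace.toDual ℝ (EuclideanSpace ℝ (Fin N))).symm l with hu
  have hul : ∀ y : EuclideanSpace ℝ (Fin N), ⟪u, y⟫ = l y := fun y =>
    InnerProductSpace.toDual_symm_apply
  have huly : ∀ y : EuclideanSpace ℝ (Fin N), ⟪y, u⟫ = l y := fun y => by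
    rw [real_inner_comm]; exact hul y
  set W := (affineSpan ℝ δ).direction with hW
  have hmax : ∀ x ∈ δ, ∀ y ∈ γ, l y ≤ l x := by
    intro x hx
    rw [hl] at hx; exact hx.2
  have hlconst : ∀ x ∈ δ, l x = l x₀ := fun x hx =>
    le_antisymm (hmax x₀ hx₀ x (hδγ hx)) (hmax x hx x₀ (hδγ hx₀))
  have hwconst : ∀ w ∈ Wᗮ, ∀ x ∈ δ, ⟪x, w⟫ = ⟪x₀, w⟫ := by
    intro w hw x hx
    have hmem : x - x₀ ∈ W := by
      have := AffineSubspace.vsub_mem_direction (subset_affineSpan ℝ δ hx)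
        (subset_affineSpan ℝ δ hx₀)
      simpa using this
    have h0 : ⟪x - x₀, w⟫ = 0 := (Submodule.mem_orthogonal W w).1 hw _ hmem
    rw [inner_sub_left] at h0; linarith
  have hgap : ∀ v ∈ A, v ∉ δ → l v < l x₀ := by
    intro v hv hvδ
    have hvγ : v ∈ γ := by rw [hγ]; exact subset_convexHull ℝ (A : Set (EuclideanSpace ℝ (Fin N))) hv
    have hle : l v ≤ l x₀ := hmax x₀ hx₀ v hvγ
    rcases lt_or_eq_of_le hle with h | h
    · exact h
    · exfalso
      apply hvδ
      rw [hl]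
      refine ⟨hvγ, fun y hy => ?_⟩
      rw [h]
      exact hmax x₀ hx₀ y hy
  have huΔ : u ∈ Δ := by
    rw [hΔ]
    intro x hx y hy
    rw [huly, huly]
    exact hmax x hx y hy
  have hkey : ∀ w ∈ Wᗮ, ∃ ε : ℝ, 0 < ε ∧ u + ε • w ∈ Δ := by
    intro w hw
    have haux : ∀ (a d : ℝ), d ≠ 0 → a / (2 * d) * d = a / 2 := by
      intro a d hd; field_simp
    have hex : ∃ ε : ℝ, 0 < ε ∧ ∀ v ∈ A, v ∉ δ →
        ε * (⟪v, w⟫ - ⟪x₀, w⟫) < l x₀ - l v := by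
      set T : Finset (EuclideanSpace ℝ (Fin N)) :=
        A.filter (fun v => v ∉ δ ∧ ⟪x₀, w⟫ < ⟪v, w⟫) with hT
      by_cases hTne : T.Nonempty
      · set f : EuclideanSpace ℝ (Fin N) → ℝ :=
          fun v => (l x₀ - l v) / (2 * (⟪v, w⟫ - ⟪x₀, w⟫)) with hf
        have hεpos : 0 < T.inf' hTne f := by
          rw [Finset.lt_inf'_iff]
          intro v hv
          rw [hT, Finset.mem_filter] at hv
          have h1 : 0 < l x₀ - l v := by
            have := hgap v hv.1 hv.2.1; linarith
          have h2 : 0 < 2 * (⟪v, w⟫ - ⟪x₀, w⟫) := by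
            have := hv.2.2; linarith
          positivity
        refine ⟨T.inf' hTne f, hεpos, ?_⟩
        intro v hv hvδ
        have h1 : 0 < l x₀ - l v := by have := hgap v hv hvδ; linarith
        rcases le_or_gt ⟪v, w⟫ ⟪x₀, w⟫ with h | h
        · have : T.inf' hTne f * (⟪v, w⟫ - ⟪x₀, w⟫) ≤ 0 :=
            mul_nonpos_of_nonneg_of_nonpos hεpos.le (by linarith)
          linarith
        · have hvT : v ∈ T := by
            rw [hT, Finset.mem_filter]; exact ⟨hv, hvδ, h⟩
          have hle : T.inf' hTne f ≤ f v := Finset.inf'_le f hvT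
          have hd : 0 < ⟪v, w⟫ - ⟪x₀, w⟫ := by linarith
          have hstep : T.inf' hTne f * (⟪v, w⟫ - ⟪x₀, w⟫) ≤
              f v * (⟪v, w⟫ - ⟪x₀, w⟫) := mul_le_mul_of_nonneg_right hle hd.le
          have hfv : f v * (⟪v, w⟫ - ⟪x₀, w⟫) = (l x₀ - l v) / 2 :=
            haux _ _ hd.ne'
          rw [hfv] at hstep
          linarith
      · refine ⟨1, one_pos, ?_⟩
        intro v hv hvδ
        have h1 : 0 < l x₀ - l v := by have := hgap v hv hvδ; linarith
        rcases le_or_gt ⟪v, w⟫ ⟪x₀, w⟫ with h | h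
        · nlinarith
        · exact (hTne ⟨v, by rw [hT, Finset.mem_filter]; exact ⟨hv, hvδ, h⟩⟩).elim
    obtain ⟨ε, hε0, hε⟩ := hex
    refine ⟨ε, hε0, ?_⟩
    rw [hΔ]
    intro x hx
    have hxval : ⟪x, u + ε • w⟫ = l x₀ + ε * ⟪x₀, w⟫ := by
      rw [inner_add_right, real_inner_smul_right, huly,
        hlconst x hx, hwconst w hw x hx]
    intro y hy
    rw [hγ] at hy
    have hconv : Convex ℝ {y : EuclideanSpace ℝ (Fin N) |
        ⟪y, u + ε • w⟫ ≤ ⟪x, u + ε • w⟫} := by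
      apply convex_halfSpace_le
      exact ⟨fun a b => inner_add_left _ _ _, fun c a => real_inner_smul_left _ _ _⟩
    refine convexHull_min ?_ hconv hy
    intro v hv
    simp only [Set.mem_setOf_eq]
    rw [hxval, inner_add_right, real_inner_smul_right, huly]
    by_cases hvδ : v ∈ δ
    · rw [hlconst v hvδ, hwconst w hw v hvδ]
    · have := hε v hv hvδ
      nlinarith
  have hspan : Submodule.span ℝ Δ = Wᗮ := by
    apply le_antisymm
    · rw [Submodule.span_le]
      intro z hz
      rw [hΔ] at hz
      simp only [SetLike.mem_coe, Submodule.mem_orthogonal]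
      set f : EuclideanSpace ℝ (Fin N) →ₗ[ℝ] ℝ :=
        { toFun := fun v => ⟪v, z⟫
          map_add' := fun a b => inner_add_left _ _ _
          map_smul' := fun c a => real_inner_smul_left _ _ _ } with hfdef
      have hWker : W ≤ LinearMap.ker f := by
        rw [hW, direction_affineSpan, vectorSpan_def, Submodule.span_le]
        rintro g ⟨a, ha, b, hb, rfl⟩
        simp only [SetLike.mem_coe, LinearMap.mem_ker]
        have h1 : ⟪a, z⟫ ≤ ⟪b, z⟫ := hz b hb a (hδγ ha)
        have h2 : ⟪b, z⟫ ≤ ⟪a, z⟫ := hz a ha b (hδγ hb)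
        show ⟪a -ᵥ b, z⟫ = 0
        have hab : a -ᵥ b = a - b := rfl
        rw [hab, inner_sub_left]
        linarith
      intro v hv
      exact hWker hv
    · intro w hw
      obtain ⟨ε, hε0, hεΔ⟩ := hkey w hw
      have h1 : u ∈ Submodule.span ℝ Δ := Submodule.subset_span huΔ
      have h2 : u + ε • w ∈ Submodule.span ℝ Δ := Submodule.subset_span hεΔ
      have h3 : ε • w ∈ Submodule.span ℝ Δ := by
        have := Submodule.sub_mem _ h2 h1
        simpa using this
      have h4 : ε⁻¹ • (ε • w) ∈ Submodule.span ℝ Δ := Submodule.smul_mem _ _ h3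
      rwa [smul_smul, inv_mul_cancel₀ hε0.ne', one_smul] at h4
  rw [hspan]
  have hsum : Module.finrank ℝ W + Module.finrank ℝ Wᗮ = N := by
    rw [Submodule.finrank_add_finrank_orthogonal]
    exact finrank_euclideanSpace_fin
  rw [hm] at hsum
  omega
end
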